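/- arXiv:1305.0640 — 3 statements merged into one kernel-verified Lean document; each statement's English description precedes it below -/
import Mathlib

section
/- For every ε > 0 there is c_1 > 0 such that for all sufficiently large n, the number λ_n of closed lambda-terms of size n satisfies λ_n ≥ c_1 · (4n/(e log n))^{n/2} · √(log n)/n. -/
open Real

/-- Lambda-terms in de Bruijn notation (so terms are identified up to renaming of
bound variables). -/
inductive Lam : Type
  | var : ℕ → Lam
  | app : Lam → Lam → Lam
  | abs : Lam → Lam

/-- Size of a lambda-term: `|x| = 1`, `|λx.T| = 1 + |T|`, `|(S*T)| = 1 + |S| + |T|`. -/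
def Lam.size : Lam → ℕ
  | .var _ => 1
  | .app s t => 1 + s.size + t.size
  | .abs t => 1 + t.size

/-- `ClosedAt n t` means all free de Bruijn indices of `t` are `< n`. -/
def Lam.ClosedAt : ℕ → Lam → Prop
  | n, .var k => k < n
  | n, .app s t => s.ClosedAt n ∧ t.ClosedAt n
  | n, .abs t => t.ClosedAt (n + 1)

/-- A closed lambda-term: every variable is bound by some abstraction. -/
def Lam.Closed (t : Lam) : Prop := t.ClosedAt 0

/-- The number of closed lambda-terms of size `n`. -/
noncomputable def lambdaCount (n : ℕ) : ℕ :=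
  Nat.card {t : Lam // t.Closed ∧ t.size = n}

namespace LowerBound

lemma size_pos : ∀ t : Lam, 0 < t.size
  | .var _ => Nat.one_pos
  | .app _ _ => by simp only [Lam.size]; omega
  | .abs _ => by simp [Lam.size]

def varsLt (B : ℕ) : Lam → Prop
  | .var k => k < B
  | .app s t => varsLt B s ∧ varsLt B t
  | .abs t => varsLt B t

lemma varsLt_mono {B B' : ℕ} (h : B ≤ B') : ∀ t : Lam, varsLt B t → varsLt B' t
  | .var k, hk => lt_of_lt_of_le hk h
  | .app s t, ⟨hs, ht⟩ => ⟨varsLt_mono h s hs, varsLt_mono h t ht⟩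
  | .abs t, ht => varsLt_mono h t ht

lemma closedAt_varsLt : ∀ (t : Lam) (m : ℕ), t.ClosedAt m → varsLt (m + t.size) t
  | .var k, m, h => by
      simp only [varsLt, Lam.size]; exact lt_of_lt_of_le h (by omega)
  | .app s t, m, h => by
      obtain ⟨hs, ht⟩ := h
      refine ⟨varsLt_mono ?_ s (closedAt_varsLt s m hs), varsLt_mono ?_ t (closedAt_varsLt t m ht)⟩ <;>
        · simp only [Lam.size]; omega
  | .abs t, m, h => by
      have := closedAt_varsLt t (m + 1) h
      simpa [varsLt, Lam.size, Nat.add_comm, Nat.add_assoc, Nat.add_left_comm] using this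

lemma finite_sized (B : ℕ) : ∀ n : ℕ, {t : Lam | t.size ≤ n ∧ varsLt B t}.Finite := by
  intro n
  induction n with
  | zero =>
      convert Set.finite_empty
      ext t
      simp only [Set.mem_setOf_eq, Set.mem_empty_iff_false, iff_false, not_and]
      intro h
      exact absurd h (by have := size_pos t; omega)
  | succ n ih =>
      apply Set.Finite.subset
        (((Set.finite_Iio B).image Lam.var).union
          ((ih.image Lam.abs).union
            (((ih.prod ih).image fun p : Lam × Lam => Lam.app p.1 p.2))))
      rintro t ⟨hs, hb⟩
      cases t with
      | var k => exact Or.inl ⟨k, hb, rfl⟩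
      | abs t =>
          refine Or.inr (Or.inl ⟨t, ⟨?_, hb⟩, rfl⟩)
          simp [Lam.size] at hs; omega
      | app s t =>
          refine Or.inr (Or.inr ⟨(s, t), ⟨⟨?_, hb.1⟩, ⟨?_, hb.2⟩⟩, rfl⟩) <;>
            · have := size_pos t; have := size_pos s; simp only [Lam.size] at hs; simp; omega

lemma lambda_finite (n : ℕ) : {t : Lam | t.Closed ∧ t.size = n}.Finite :=
  (finite_sized n n).subset (fun t ht => ⟨ht.2.le, by
    have := closedAt_varsLt t 0 ht.1
    rwa [Nat.zero_add, ht.2] at this⟩)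

/-- iterated abstraction -/
def absIter : ℕ → Lam → Lam
  | 0, t => t
  | n + 1, t => .abs (absIter n t)

lemma absIter_size (n : ℕ) (t : Lam) : (absIter n t).size = n + t.size := by
  induction n with
  | zero => simp [absIter]
  | succ n ih => simp [absIter, Lam.size, ih]; omega

lemma absIter_closedAt : ∀ (n m : ℕ) (t : Lam), t.ClosedAt (m + n) → (absIter n t).ClosedAt m := by
  intro n
  induction n with
  | zero => intro m t h; simpa [absIter] using h
  | succ n ih =>
      intro m t h
      exact ih (m + 1) t (by rwa [show m + 1 + n = m + (n + 1) by omega])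

lemma absIter_injective (n : ℕ) : Function.Injective (absIter n) := by
  induction n with
  | zero => exact fun a b h => h
  | succ n ih =>
      intro a b h
      simp only [absIter, Lam.abs.injEq] at h
      exact ih h

inductive BT : Type
  | leaf : ℕ → BT
  | node : BT → BT → BT

def BT.toLam : BT → Lam
  | .leaf k => .var k
  | .node l r => .app l.toLam r.toLam

def BT.leaves : BT → ℕ
  | .leaf _ => 1
  | .node l r => l.leaves + r.leaves

def BT.Bounded (u : ℕ) : BT → Prop
  | .leaf k => k < u
  | .node l r => l.Bounded u ∧ r.Bounded u

lemma BT.toLam_injective : Function.Injective BT.toLam := by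
  intro a
  induction a with
  | leaf k => intro b h; cases b <;> simp [BT.toLam] at h ⊢; exact h
  | node l r ihl ihr =>
      intro b h
      cases b <;> simp [BT.toLam] at h
      obtain ⟨h1, h2⟩ := h
      rw [ihl h1, ihr h2]

lemma BT.toLam_size : ∀ t : BT, t.toLam.size + 1 = 2 * t.leaves
  | .leaf _ => rfl
  | .node l r => by
      have hl := BT.toLam_size l
      have hr := BT.toLam_size r
      simp [BT.toLam, BT.leaves, Lam.size] at *
      omega

lemma BT.toLam_closedAt {u : ℕ} : ∀ {t : BT}, t.Bounded u → t.toLam.ClosedAt u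
  | .leaf _, h => h
  | .node _ _, ⟨hl, hr⟩ => ⟨BT.toLam_closedAt hl, BT.toLam_closedAt hr⟩

def lab (g : ℕ → ℕ) : Tree Unit → ℕ → BT
  | BinaryTree.nil, i => BT.leaf (g i)
  | BinaryTree.node _ l r, i => BT.node (lab g l i) (lab g r (i + l.numLeaves))

def forget : BT → Tree Unit
  | .leaf _ => Tree.nil
  | .node l r => Tree.node () (forget l) (forget r)

lemma forget_lab (g : ℕ → ℕ) : ∀ (t : Tree Unit) (i : ℕ), forget (lab g t i) = t
  | BinaryTree.nil, _ => rfl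
  | BinaryTree.node _ l r, i => by
      simp [lab, forget, forget_lab g l i, forget_lab g r (i + l.numLeaves)]

lemma leaves_lab (g : ℕ → ℕ) : ∀ (t : Tree Unit) (i : ℕ), (lab g t i).leaves = t.numLeaves
  | BinaryTree.nil, _ => rfl
  | BinaryTree.node _ l r, i => by
      simp [lab, BT.leaves, BinaryTree.numLeaves, leaves_lab g l i, leaves_lab g r (i + l.numLeaves)]

lemma bounded_lab {u : ℕ} {g : ℕ → ℕ} (hg : ∀ j, g j < u) :
    ∀ (t : Tree Unit) (i : ℕ), (lab g t i).Bounded u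
  | BinaryTree.nil, i => hg i
  | BinaryTree.node _ l r, i => ⟨bounded_lab hg l i, bounded_lab hg r (i + l.numLeaves)⟩

lemma lab_label_eq (g g' : ℕ → ℕ) :
    ∀ (t : Tree Unit) (i : ℕ), lab g t i = lab g' t i →
      ∀ j, i ≤ j → j < i + t.numLeaves → g j = g' j
  | BinaryTree.nil, i, h, j, h1, h2 => by
      have hj : j = i := by simp [BinaryTree.numLeaves] at h2; omega
      subst hj
      simpa [lab, BT.leaf.injEq] using h
  | BinaryTree.node _ l r, i, h, j, h1, h2 => by
      simp only [lab, BT.node.injEq] at h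
      rcases lt_or_ge j (i + l.numLeaves) with hj | hj
      · exact lab_label_eq g g' l i h.1 j h1 hj
      · refine lab_label_eq g g' r (i + l.numLeaves) h.2 j hj ?_
        simp [BinaryTree.numLeaves, Tree.numLeaves] at h2 ⊢; omega

lemma count_lb (u f : ℕ) (hu : 1 ≤ u) (hf : 1 ≤ f) :
    catalan (f - 1) * u ^ f ≤ lambdaCount (u + 2 * f - 1) := by
  haveI : Finite {t : Lam // t.Closed ∧ t.size = u + 2 * f - 1} :=
    (lambda_finite (u + 2 * f - 1)).to_subtype
  set g : (Fin f → Fin u) → ℕ → ℕ := fun h j => if hj : j < f then (h ⟨j, hj⟩ : ℕ) else 0 with hg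
  have hglt : ∀ (h : Fin f → Fin u) (j : ℕ), g h j < u := by
    intro h j
    by_cases hj : j < f
    · simp only [hg, dif_pos hj]; exact (h ⟨j, hj⟩).2
    · simp only [hg, dif_neg hj]; omega
  have hnodes : ∀ t : Tree Unit, t ∈ Tree.treesOfNumNodesEq (f - 1) → t.numLeaves = f := by
    intro t ht
    rw [Tree.numLeaves, BinaryTree.numLeaves_eq_numNodes_succ, (BinaryTree.mem_treesOfNumNodesEq.mp ht)]
    omega
  set F : {t : Tree Unit // t ∈ Tree.treesOfNumNodesEq (f - 1)} × (Fin f → Fin u) →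
      {s : Lam // s.Closed ∧ s.size = u + 2 * f - 1} := fun p =>
    ⟨absIter u (BT.toLam (lab (g p.2) p.1.1 0)),
      by
        constructor
        · exact absIter_closedAt u 0 _ (by
            simpa using BT.toLam_closedAt (bounded_lab (hglt p.2) p.1.1 0))
        · rw [absIter_size]
          have h1 := BT.toLam_size (lab (g p.2) p.1.1 0)
          rw [leaves_lab, hnodes p.1.1 p.1.2] at h1
          omega⟩ with hF
  have hFinj : Function.Injective F := by
    intro p q h
    simp only [hF, Subtype.mk.injEq] at h
    have h2 := BT.toLam_injective (absIter_injective u h)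
    have ht : p.1.1 = q.1.1 := by
      have := forget_lab (g p.2) p.1.1 0
      rw [h2, forget_lab] at this
      exact this.symm
    have hlabels : p.2 = q.2 := by
      funext j
      have := lab_label_eq (g p.2) (g q.2) p.1.1 0 (by rw [ht] at h2 ⊢; exact h2) j
        (Nat.zero_le _) (by rw [hnodes p.1.1 p.1.2]; omega)
      simp only [hg, dif_pos j.2] at this
      exact Fin.ext (by simpa using this)
    exact Prod.ext (Subtype.ext ht) hlabels
  calc catalan (f - 1) * u ^ f
      = Nat.card ({t : Tree Unit // t ∈ Tree.treesOfNumNodesEq (f - 1)} × (Fin f → Fin u)) := by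
        rw [Nat.card_prod, Nat.card_fun, Nat.card_eq_finsetCard,
          BinaryTree.treesOfNumNodesEq_card_eq_catalan, Nat.card_eq_fintype_card, Nat.card_eq_fintype_card,
          Fintype.card_fin, Fintype.card_fin]
    _ ≤ lambdaCount (u + 2 * f - 1) := Nat.card_le_card_of_injective F hFinj

end LowerBound

namespace LowerBound

lemma four_pow_le_catalan (k : ℕ) : 4 ^ k ≤ 2 * (k + 1) ^ 2 * catalan k := by
  have h1 : 4 ^ k ≤ (2 * k + 2) * Nat.centralBinom k := by
    rcases Nat.eq_zero_or_pos k with rfl | hk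
    · simp [Nat.centralBinom]
    · calc 4 ^ k ≤ 2 * k * Nat.centralBinom k :=
            Nat.four_pow_le_two_mul_self_mul_centralBinom k hk
        _ ≤ (2 * k + 2) * Nat.centralBinom k := Nat.mul_le_mul_right _ (by omega)
  rw [← succ_mul_catalan_eq_centralBinom] at h1
  calc 4 ^ k ≤ (2 * k + 2) * ((k + 1) * catalan k) := h1
    _ = 2 * (k + 1) ^ 2 * catalan k := by ring

/-- `log (1 - t) ≥ -2t` for `0 ≤ t ≤ 1/2`. -/
lemma log_one_sub_ge {t : ℝ} (h0 : 0 ≤ t) (h2 : t ≤ 1 / 2) : -(2 * t) ≤ Real.log (1 - t) := by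
  have h1t : (0:ℝ) < 1 - t := by linarith
  have hexp : Real.exp (-(2 * t)) ≤ 1 - t := by
    have h2t : 1 + 2 * t ≤ Real.exp (2 * t) := by
      have := Real.add_one_le_exp (2 * t); linarith
    have hpos : (0:ℝ) < 1 + 2 * t := by linarith
    have hinv : Real.exp (-(2 * t)) = (Real.exp (2 * t))⁻¹ := by
      rw [Real.exp_neg]
    rw [hinv]
    have h1 : (Real.exp (2 * t))⁻¹ ≤ (1 + 2 * t)⁻¹ := by
      apply inv_anti₀ hpos h2t
    refine h1.trans ?_
    rw [inv_le_iff_one_le_mul₀ hpos]  -- maybe wrong name; fix below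
    nlinarith
  calc -(2 * t) = Real.log (Real.exp (-(2 * t))) := (Real.log_exp _).symm
    _ ≤ Real.log (1 - t) := Real.log_le_log (Real.exp_pos _) hexp

end LowerBound

open Filter

/-- For every `ε > 0` there is `c₁ > 0` such that for all sufficiently large `n`,
`λ_n ≥ c₁ (4n/(e log n))^{n/2} √(log n) / n`. -/
theorem lambda_lower_bound :
    ∀ ε : ℝ, 0 < ε → ∃ c₁ : ℝ, 0 < c₁ ∧ ∃ N : ℕ, ∀ n : ℕ, N ≤ n →
      (lambdaCount n : ℝ) ≥
        c₁ * (4 * n / (Real.exp 1 * Real.log n)) ^ ((n : ℝ) / 2) *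
          Real.sqrt (Real.log n) / n := by
  intro ε hε
  refine ⟨1, one_pos, ?_⟩
  have H : ∀ᶠ n : ℕ in atTop, (lambdaCount n : ℝ) ≥
      1 * (4 * n / (Real.exp 1 * Real.log n)) ^ ((n : ℝ) / 2) * Real.sqrt (Real.log n) / n := by
    have hcast : Tendsto (fun n : ℕ => (n : ℝ)) atTop atTop := tendsto_natCast_atTop_atTop
    have hlog : Tendsto (fun n : ℕ => Real.log n) atTop atTop :=
      Real.tendsto_log_atTop.comp hcast
    have E1 : ∀ᶠ n : ℕ in atTop, (2:ℝ) ≤ Real.log n := hlog.eventually_ge_atTop 2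
    have E2 : ∀ᶠ n : ℕ in atTop, Real.log 4 + 1 ≤ Real.log (Real.log n) :=
      (Real.tendsto_log_atTop.comp hlog).eventually_ge_atTop _
    have E3' : ∀ᶠ y : ℝ in atTop, ‖Real.log y ^ 2‖ ≤ (1/14) * ‖y‖ :=
      (Real.isLittleO_pow_log_id_atTop (n := 2)).def (by norm_num)
    have E3 : ∀ᶠ n : ℕ in atTop, ‖Real.log (n:ℝ) ^ 2‖ ≤ (1/14) * ‖(n:ℝ)‖ :=
      hcast.eventually E3'
    filter_upwards [E1, E2, E3, eventually_ge_atTop 1] with n h1 h2 h3 hn1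
    set x : ℝ := (n : ℝ) with hxdef
    set L : ℝ := Real.log x with hLdef
    have hL2 : (2:ℝ) ≤ L := h1
    have hL0 : (0:ℝ) < L := by linarith
    have hx1 : (1:ℝ) ≤ x := by rw [hxdef]; exact_mod_cast hn1
    have hx0 : (0:ℝ) < x := by linarith
    have h14 : 14 * L ^ 2 ≤ x := by
      rw [Real.norm_eq_abs, Real.norm_eq_abs, abs_of_nonneg (by positivity),
        abs_of_nonneg (by linarith)] at h3
      linarith
    set r : ℝ := x / L with hrdef
    have hr0 : (0:ℝ) < r := by positivity
    have hsqid : L^2 = L*L := pow_two L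
    have hxL : 14 * L ≤ r := by rw [hrdef, le_div_iff₀ hL0]; linarith
    have hr28 : (28:ℝ) ≤ r := by linarith
    set m : ℕ := ⌊r⌋₊ with hmdef
    have hm_le : (m:ℝ) ≤ r := Nat.floor_le hr0.le
    have hm_gt : r - 1 < (m:ℝ) := Nat.sub_one_lt_floor r
    have hm27 : 27 ≤ m := by
      have : (27:ℝ) ≤ (m:ℝ) := by linarith
      exact_mod_cast this
    have hrx2 : r ≤ x / 2 := by rw [hrdef]; gcongr
    have h2m : 2 * m ≤ n := by
      have h2mr : (2*m:ℝ) ≤ x := by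
        have := hm_le.trans hrx2; linarith
      rw [hxdef] at h2mr
      exact_mod_cast h2mr
    set u : ℕ := if (n + 1 - m) % 2 = 0 then m else m - 1 with hudef
    have hum : u ≤ m ∧ m - 1 ≤ u ∧ (n + 1 - u) % 2 = 0 := by
      rw [hudef]
      by_cases h : (n + 1 - m) % 2 = 0
      · rw [if_pos h]; omega
      · rw [if_neg h]; omega
    obtain ⟨hum1, hum2, hpar⟩ := hum
    have hu1 : 1 ≤ u := by omega
    set f : ℕ := (n + 1 - u) / 2 with hfdef
    have h2f : 2 * f = n + 1 - u := by omega
    have hf1 : 1 ≤ f := by omega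
    have hfn : f ≤ n := by omega
    have hkey : u + 2 * f - 1 = n := by omega
    have hcomb : catalan (f - 1) * u ^ f ≤ lambdaCount n := by
      have := LowerBound.count_lb u f hu1 hf1
      rwa [hkey] at this
    -- real facts
    have hu_pos : (0:ℝ) < (u:ℝ) := by exact_mod_cast hu1
    have hur_le : (u:ℝ) ≤ r := le_trans (by exact_mod_cast hum1) hm_le
    have hur_ge : r - 2 ≤ (u:ℝ) := by
      have hcast2 : ((m - 1 : ℕ):ℝ) ≤ (u:ℝ) := by exact_mod_cast hum2
      rw [Nat.cast_sub (by omega)] at hcast2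
      push_cast at hcast2
      linarith
    have hfreal : (f:ℝ) = (x + 1 - u) / 2 := by
      have hc : ((2 * f : ℕ) : ℝ) = ((n + 1 - u : ℕ) : ℝ) := by rw [h2f]
      rw [Nat.cast_sub (by omega)] at hc
      push_cast at hc
      rw [hxdef]
      linarith
    -- catalan bound
    have hcat : (4:ℝ) ^ f ≤ 8 * x ^ 2 * (catalan (f - 1) : ℝ) := by
      have ha : (4:ℕ) ^ (f - 1) ≤ 2 * f ^ 2 * catalan (f - 1) := by
        have := LowerBound.four_pow_le_catalan (f - 1)
        rwa [show f - 1 + 1 = f by omega] at this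
      have hb : (4:ℕ) ^ f ≤ 8 * f ^ 2 * catalan (f - 1) := by
        calc (4:ℕ)^f = 4 * 4 ^ (f-1) := by
              rw [← pow_succ']; congr 1; omega
          _ ≤ 4 * (2 * f^2 * catalan (f-1)) := Nat.mul_le_mul_left _ ha
          _ = 8 * f^2 * catalan (f-1) := by ring
      have hbR : (4:ℝ) ^ f ≤ 8 * (f:ℝ)^2 * (catalan (f-1) : ℝ) := by exact_mod_cast hb
      have hfx : (f:ℝ) ≤ x := by rw [hxdef]; exact_mod_cast hfn
      have hcat0 : (0:ℝ) ≤ (catalan (f-1):ℝ) := by positivity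
      calc (4:ℝ)^f ≤ 8 * (f:ℝ)^2 * (catalan (f-1):ℝ) := hbR
        _ ≤ 8 * x^2 * (catalan (f-1):ℝ) := by
            apply mul_le_mul_of_nonneg_right _ hcat0
            have : (f:ℝ)^2 ≤ x^2 := by
              apply pow_le_pow_left₀ (by positivity) hfx
            linarith
    have hmain : ((4:ℝ) * u) ^ f / (8 * x ^ 2) ≤ (lambdaCount n : ℝ) := by
      have hcountR : (catalan (f-1) : ℝ) * (u:ℝ) ^ f ≤ (lambdaCount n : ℝ) := by
        exact_mod_cast hcomb
      rw [div_le_iff₀ (by positivity)]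
      calc ((4:ℝ)*u)^f = (4:ℝ)^f * (u:ℝ)^f := mul_pow _ _ _
        _ ≤ (8 * x^2 * (catalan (f-1):ℝ)) * (u:ℝ)^f :=
            mul_le_mul_of_nonneg_right hcat (by positivity)
        _ = ((catalan (f-1):ℝ) * (u:ℝ)^f) * (8 * x^2) := by ring
        _ ≤ (lambdaCount n : ℝ) * (8 * x^2) :=
            mul_le_mul_of_nonneg_right hcountR (by positivity)
    rw [ge_iff_le, one_mul]
    refine le_trans ?_ hmain
    set A : ℝ := 4 * x / (Real.exp 1 * L) with hAdef
    have hA0 : (0:ℝ) < A := by positivity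
    have hRHS0 : (0:ℝ) < A ^ (x/2) * Real.sqrt L / x := by positivity
    have hLHS0 : (0:ℝ) < ((4:ℝ)*u)^f / (8*x^2) := by positivity
    rw [← Real.log_le_log_iff hRHS0 hLHS0]
    have hlogRHS : Real.log (A ^ (x/2) * Real.sqrt L / x) =
        (x/2) * Real.log A + Real.log L / 2 - L := by
      rw [Real.log_div (by positivity) hx0.ne', Real.log_mul (by positivity) (by positivity),
        Real.log_rpow hA0, Real.log_sqrt hL0.le, ← hLdef]
    have hlogA : Real.log A = Real.log 4 + L - 1 - Real.log L := by
      rw [hAdef, Real.log_div (by positivity) (by positivity),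
        Real.log_mul (by norm_num) hx0.ne', Real.log_mul (Real.exp_ne_zero 1) hL0.ne',
        Real.log_exp, ← hLdef]
      ring
    have h8x : Real.log (8*x^2) = Real.log 8 + 2*L := by
      rw [Real.log_mul (by norm_num) (by positivity), Real.log_pow, ← hLdef]
      push_cast
      ring
    have hlogLHS : Real.log (((4:ℝ)*u)^f / (8*x^2)) =
        (f:ℝ) * Real.log (4*(u:ℝ)) - (Real.log 8 + 2*L) := by
      rw [Real.log_div (by positivity) (by positivity), Real.log_pow, h8x]
    rw [hlogRHS, hlogLHS, hlogA]
    -- key log facts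
    have hF1 : Real.log (4*(u:ℝ)) = Real.log 4 + Real.log u :=
      Real.log_mul (by norm_num) hu_pos.ne'
    have hlogr : Real.log r = L - Real.log L := by
      rw [hrdef, Real.log_div hx0.ne' hL0.ne', ← hLdef]
    have hF2 : Real.log (u:ℝ) ≤ L - Real.log L :=
      (Real.log_le_log hu_pos hur_le).trans_eq hlogr
    have hF3 : L - Real.log L - 4*L/x ≤ Real.log (u:ℝ) := by
      have ht0 : (0:ℝ) ≤ 2*L/x := by positivity
      have h4L : 4*L ≤ x := by linarith only [hxL, hrx2, hL0.le]
      have ht12 : 2*L/x ≤ 1/2 := by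
        rw [div_le_iff₀ hx0]; linarith only [h4L]
      have hts := LowerBound.log_one_sub_ge ht0 ht12
      have hident : r - 2 = r * (1 - 2*L/x) := by
        rw [hrdef]; field_simp
      have h1t : (0:ℝ) < 1 - 2*L/x := by linarith only [ht12]
      have hlogr2 : Real.log (r - 2) = Real.log r + Real.log (1 - 2*L/x) := by
        rw [hident, Real.log_mul hr0.ne' h1t.ne']
      have hle : Real.log (r - 2) ≤ Real.log (u:ℝ) :=
        Real.log_le_log (by linarith only [hr28]) hur_ge
      rw [hlogr2, hlogr] at hle
      have hts' : -(4*L/x) ≤ Real.log (1 - 2*L/x) :=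
        calc -(4*L/x) = -(2*(2*L/x)) := by ring
          _ ≤ Real.log (1 - 2*L/x) := hts
      linarith only [hle, hts']
    have hu1R : (1:ℝ) ≤ (u:ℝ) := by exact_mod_cast hu1
    have hF4 : (0:ℝ) ≤ Real.log (4*(u:ℝ)) := by
      apply Real.log_nonneg
      linarith only [hu1R]
    have hbound : Real.log (4*(u:ℝ)) ≤ Real.log 4 + L - Real.log L := by
      rw [hF1]; linarith only [hF2]
    have hF5 : ((u:ℝ)-1)/2 * Real.log (4*(u:ℝ)) ≤ r/2 * (Real.log 4 + L - Real.log L) := by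
      apply mul_le_mul _ hbound hF4 (by positivity)
      · linarith only [hur_le]
    have hF6 : r/2 * (Real.log 4 + L - Real.log L) =
        x/2 + x/(2*L) * (Real.log 4 - Real.log L) := by
      rw [hrdef]; field_simp; ring
    have hF7 : (x/2) * (Real.log 4 + L - Real.log L) - 2*L ≤ (x/2) * Real.log (4*(u:ℝ)) := by
      have hlow : Real.log 4 + L - Real.log L - 4*L/x ≤ Real.log (4*(u:ℝ)) := by
        rw [hF1]; linarith only [hF3]
      have hmul := mul_le_mul_of_nonneg_left hlow (by positivity : (0:ℝ) ≤ x/2)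
      have hid : (x/2) * (4*L/x) = 2*L := by field_simp; ring
      linarith only [hmul, hid]
    have hF8 : (f:ℝ) * Real.log (4*(u:ℝ)) =
        (x/2) * Real.log (4*(u:ℝ)) - ((u:ℝ)-1)/2 * Real.log (4*(u:ℝ)) := by
      rw [hfreal]; ring
    -- final numeric facts
    have hN1 : Real.log L ≤ L - 1 := Real.log_le_sub_one_of_pos hL0
    have hN2 : Real.log 8 ≤ 7 := by
      have h8' := Real.log_le_sub_one_of_pos (show (0:ℝ) < 8 by norm_num)
      linarith only [h8']
    have hN3 : 7*L ≤ x/(2*L) := by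
      rw [le_div_iff₀ (by positivity)]
      have hid2 : 7*L*(2*L) = 14*L^2 := by ring
      linarith only [h14, hid2]
    have hN4 : (1:ℝ) ≤ Real.log L - Real.log 4 := by linarith only [h2]
    have hN5 : 7*L * 1 ≤ x/(2*L) * (Real.log L - Real.log 4) := by
      apply mul_le_mul hN3 hN4 (by norm_num)
      positivity
    linarith only [hF5, hF6, hF7, hF8, hN1, hN2, hN5, hL2]
  exact eventually_atTop.mp H
end

section
/- For every ε > 0 there is c_2 > 0 such that for all sufficiently large n, the number λ_n of closed lambda-terms of size n satisfies λ_n ≤ c_2 · (9(1+ε)n/(e log n))^{n/2} · (log n)^{n/(2 log n)} / n^{3/2}. -/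
open Real

namespace LamProof

abbrev Sym : Type := ℕ ⊕ Bool

@[simp] lemma beq_inl_inr (k : ℕ) (b : Bool) : ((Sum.inl k : Sym) == Sum.inr b) = false := rfl
@[simp] lemma beq_inr_inl (k : ℕ) (b : Bool) : ((Sum.inr b : Sym) == Sum.inl k) = false := rfl
@[simp] lemma beq_inr_inr (b b' : Bool) : ((Sum.inr b : Sym) == Sum.inr b') = (b == b') := rfl
@[simp] lemma beq_inl_inl (k k' : ℕ) : ((Sum.inl k : Sym) == Sum.inl k') = (k == k') := rfl

def enc : Lam → List Sym
  | .var k => [Sum.inl k]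
  | .app s t => Sum.inr true :: (enc s ++ enc t)
  | .abs t => Sum.inr false :: enc t

lemma enc_length (t : Lam) : (enc t).length = t.size := by
  induction t with
  | var k => rfl
  | app s t ihs iht => simp [enc, Lam.size, ihs, iht]; omega
  | abs t iht => simp [enc, Lam.size, iht]; omega

lemma enc_append_inj : ∀ (t t' : Lam) (l l' : List Sym),
    enc t ++ l = enc t' ++ l' → t = t' ∧ l = l' := by
  intro t
  induction t with
  | var k =>
    intro t' l l' h
    cases t' with
    | var k' =>
      simp only [enc, List.cons_append, List.nil_append, List.cons.injEq,
        Sum.inl.injEq] at h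
      exact ⟨by rw [h.1], h.2⟩
    | app s' t'' => simp [enc] at h
    | abs t'' => simp [enc] at h
  | app s t ihs iht =>
    intro t' l l' h
    cases t' with
    | var k' => simp [enc] at h
    | app s' t'' =>
      simp only [enc, List.cons_append, List.cons.injEq, List.append_assoc] at h
      obtain ⟨-, h⟩ := h
      obtain ⟨rfl, h2⟩ := ihs _ _ _ h
      obtain ⟨rfl, rfl⟩ := iht _ _ _ h2
      exact ⟨rfl, rfl⟩
    | abs t'' => simp [enc] at h
  | abs t iht =>
    intro t' l l' h
    cases t' with
    | var k' => simp [enc] at h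
    | app s' t'' => simp [enc] at h
    | abs t'' =>
      simp only [enc, List.cons_append, List.cons.injEq] at h
      obtain ⟨-, h⟩ := h
      obtain ⟨rfl, rfl⟩ := iht _ _ _ h
      exact ⟨rfl, rfl⟩

lemma enc_inj : Function.Injective enc := fun t t' h =>
  (enc_append_inj t t' [] [] (by simp [h])).1

/-- the list of variable labels, in preorder -/
def lb (w : List Sym) : List ℕ := w.filterMap Sum.getLeft?

lemma counts (t : Lam) :
    (lb (enc t)).length = (enc t).count (Sum.inr true) + 1 := by
  induction t with
  | var k => simp [enc, lb, List.count_cons]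
  | app s t ihs iht =>
    simp only [enc, lb, List.filterMap_cons, List.filterMap_append, Sum.getLeft?,
      List.count_cons, List.count_append, List.length_append, beq_iff_eq] at *
    simp_all
    omega
  | abs t iht =>
    simp only [enc, lb, List.filterMap_cons, Sum.getLeft?, List.count_cons, beq_iff_eq] at *
    simp_all

lemma lb_lt (t : Lam) : ∀ m, t.ClosedAt m →
    ∀ x ∈ lb (enc t), x < m + (enc t).count (Sum.inr false) := by
  induction t with
  | var k =>
    intro m hm x hx
    simp only [enc, lb, List.filterMap_cons, Sum.getLeft?] at hx
    simp only [List.filterMap_nil, List.mem_singleton] at hx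
    have hkm : x < m := hx ▸ hm
    simp only [enc, List.count_cons, List.count_nil]
    simp
    omega
  | app s t ihs iht =>
    intro m hm x hx
    obtain ⟨hs, ht⟩ := hm
    simp only [enc, lb, List.filterMap_cons, Sum.getLeft?, List.filterMap_append,
      List.mem_append] at hx
    have hcount : (enc (Lam.app s t)).count (Sum.inr false)
        = (enc s).count (Sum.inr false) + (enc t).count (Sum.inr false) := by
      simp [enc, List.count_cons, List.count_append, beq_iff_eq]
    rcases hx with hx | hx
    · have := ihs m hs x hx
      omega
    · have := iht m ht x hx
      omega
  | abs t iht =>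
    intro m hm x hx
    simp only [enc, lb, List.filterMap_cons, Sum.getLeft?] at hx
    have := iht (m + 1) hm x hx
    have hcount : (enc (Lam.abs t)).count (Sum.inr false)
        = (enc t).count (Sum.inr false) + 1 := by
      simp [enc, List.count_cons, beq_iff_eq]
    omega

def tag : Sym → Fin 3
  | .inl _ => 0
  | .inr true => 1
  | .inr false => 2

lemma count_tag (w : List Sym) :
    ((w.map tag).count 0 = (lb w).length) ∧
    ((w.map tag).count 1 = w.count (Sum.inr true)) ∧
    ((w.map tag).count 2 = w.count (Sum.inr false)) := by
  induction w with
  | nil => simp [lb]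
  | cons x w ih =>
    obtain ⟨h0, h1, h2⟩ := ih
    rcases x with k | b
    · simp [lb, tag, List.count_cons, h0, h1, h2, beq_iff_eq]
    · cases b <;> simp [lb, tag, List.count_cons, h0, h1, h2, beq_iff_eq, List.filterMap_cons, Sum.getLeft?]

lemma recover : ∀ (w w' : List Sym), w.map tag = w'.map tag → lb w = lb w' → w = w' := by
  intro w
  induction w with
  | nil =>
    intro w' h _
    cases w' with
    | nil => rfl
    | cons y w'' => simp at h
  | cons x w ih =>
    intro w' h hl
    cases w' with
    | nil => simp at h
    | cons y w'' =>
      simp only [List.map_cons, List.cons.injEq] at h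
      obtain ⟨hxy, hw⟩ := h
      rcases x with k | b <;> rcases y with k' | b'
      · simp only [lb, List.filterMap_cons, Sum.getLeft?, List.cons.injEq] at hl
        obtain ⟨rfl, hl⟩ := hl
        rw [ih _ hw hl]
      · cases b' <;> simp [tag] at hxy
      · cases b <;> simp [tag] at hxy
      · have hbb : b = b' := by
          cases b <;> cases b' <;> first | rfl | (simp [tag] at hxy)
        subst hbb
        simp only [lb, List.filterMap_cons, Sum.getLeft?] at hl
        rw [ih _ hw hl]

lemma count_fin3 (l : List (Fin 3)) : l.count 0 + l.count 1 + l.count 2 = l.length := by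
  induction l with
  | nil => simp
  | cons x l ih =>
    fin_cases x <;> simp [List.count_cons] <;> omega

/-- base-`u` encoding of a list of digits -/
def encL (u : ℕ) : List ℕ → ℕ
  | [] => 0
  | d :: l => d + u * encL u l

lemma encL_lt (u : ℕ) : ∀ l : List ℕ, (∀ x ∈ l, x < u) → encL u l < u ^ l.length := by
  intro l
  induction l with
  | nil => intro _; simp [encL]
  | cons d l ih =>
    intro h
    have hd : d < u := h d (by simp)
    have he : encL u l < u ^ l.length := ih (fun x hx => h x (by simp [hx]))
    simp only [encL, List.length_cons, pow_succ]
    calc d + u * encL u l < u * (encL u l + 1) := by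
          rw [Nat.mul_add, Nat.mul_one]; omega
      _ ≤ u ^ l.length * u := by
          rw [mul_comm]
          exact Nat.mul_le_mul_right u he
  
lemma encL_inj (u : ℕ) : ∀ l l' : List ℕ, (∀ x ∈ l, x < u) → (∀ x ∈ l', x < u) →
    l.length = l'.length → encL u l = encL u l' → l = l' := by
  intro l
  induction l with
  | nil =>
    intro l' _ _ hlen _
    cases l' with
    | nil => rfl
    | cons d l'' => simp at hlen
  | cons d l ih =>
    intro l' h h' hlen he
    cases l' with
    | nil => simp at hlen
    | cons d' l'' =>
      have hd : d < u := h d (by simp)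
      have hd' : d' < u := h' d' (by simp)
      simp only [encL] at he
      have hdd : d = d' := by
        have h1 : (d + u * encL u l) % u = d := by
          rw [Nat.add_mul_mod_self_left]; exact Nat.mod_eq_of_lt hd
        have h2 : (d' + u * encL u l'') % u = d' := by
          rw [Nat.add_mul_mod_self_left]; exact Nat.mod_eq_of_lt hd'
        rw [← h1, he, h2]
      subst hdd
      have hu : 0 < u := Nat.pos_of_ne_zero (by omega)
      have he2 : encL u l = encL u l'' := by
        have : u * encL u l = u * encL u l'' := by omega
        exact Nat.eq_of_mul_eq_mul_left hu this
      have := ih l'' (fun x hx => h x (by simp [hx])) (fun x hx => h' x (by simp [hx]))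
        (by simpa using hlen) he2
      rw [this]

def wgt (n : ℕ) (s : List.Vector (Fin 3) n) : ℕ :=
  if s.toList.count 0 = s.toList.count 1 + 1 then (s.toList.count 2) ^ (s.toList.count 0) else 0

def X (n : ℕ) : Type := Σ s : List.Vector (Fin 3) n, Fin (wgt n s)

noncomputable instance (n : ℕ) : Fintype (X n) := by unfold X; infer_instance

lemma card_X (n : ℕ) : Fintype.card (X n) = ∑ s : List.Vector (Fin 3) n, wgt n s := by
  simp [X]

def Φ (n : ℕ) (t : {t : Lam // t.Closed ∧ t.size = n}) : X n :=
  ⟨⟨(enc t.1).map tag, by rw [List.length_map, enc_length, t.2.2]⟩,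
   ⟨encL ((enc t.1).count (Sum.inr false)) (lb (enc t.1)), by
      obtain ⟨h0, h1, h2⟩ := count_tag (enc t.1)
      have hv := counts t.1
      have hb := lb_lt t.1 0 t.2.1
      show encL _ _ < wgt n ⟨(enc t.1).map tag, _⟩
      unfold wgt
      simp only [List.Vector.toList_mk]
      simp only [h2, h0, h1, ← hv, if_true, ↓reduceIte]
      exact encL_lt _ _ (fun x hx => by simpa using hb x hx)⟩⟩

lemma Φ_inj (n : ℕ) : Function.Injective (Φ n) := by
  intro t₁ t₂ h
  have hs : ((enc t₁.1).map tag) = ((enc t₂.1).map tag) := by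
    have := congrArg (fun p : X n => p.1.toList) h
    simpa [Φ] using this
  have hval : encL ((enc t₁.1).count (Sum.inr false)) (lb (enc t₁.1))
      = encL ((enc t₂.1).count (Sum.inr false)) (lb (enc t₂.1)) := by
    have := congrArg (fun p : X n => (p.2 : ℕ)) h
    simpa [Φ] using this
  have hu : (enc t₁.1).count (Sum.inr false) = (enc t₂.1).count (Sum.inr false) := by
    have e1 := (count_tag (enc t₁.1)).2.2
    have e2 := (count_tag (enc t₂.1)).2.2
    rw [← e1, ← e2, hs]
  have hlen : (lb (enc t₁.1)).length = (lb (enc t₂.1)).length := by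
    have e1 := (count_tag (enc t₁.1)).1
    have e2 := (count_tag (enc t₂.1)).1
    rw [← e1, ← e2, hs]
  have hlb : lb (enc t₁.1) = lb (enc t₂.1) := by
    refine encL_inj _ _ _ (fun x hx => ?_) (fun x hx => ?_) hlen (by rw [hval, hu])
    · simpa using lb_lt t₁.1 0 t₁.2.1 x hx
    · rw [hu]; simpa using lb_lt t₂.1 0 t₂.2.1 x hx
  exact Subtype.ext (enc_inj (recover _ _ hs hlb))

lemma main_card (n : ℕ) (R : ℝ) (hR : 0 ≤ R)
    (h : ∀ u a : ℕ, 2 * a + u = n + 1 → ((u : ℝ)) ^ a ≤ R) :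
    (lambdaCount n : ℝ) ≤ 3 ^ n * R := by
  have hw : ∀ s : List.Vector (Fin 3) n, (wgt n s : ℝ) ≤ R := by
    intro s
    unfold wgt
    split_ifs with hc
    · push_cast
      refine h (s.toList.count 2) (s.toList.count 0) ?_
      have h3 := count_fin3 s.toList
      rw [s.toList_length] at h3
      omega
    · simpa using hR
  have h1 : lambdaCount n ≤ Fintype.card (X n) := by
    rw [← Nat.card_eq_fintype_card]
    exact Nat.card_le_card_of_injective _ (Φ_inj n)
  have h2 : (Fintype.card (X n) : ℝ) ≤ 3 ^ n * R := by
    rw [card_X]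
    push_cast
    calc ∑ s : List.Vector (Fin 3) n, (wgt n s : ℝ)
        ≤ ∑ _s : List.Vector (Fin 3) n, R := Finset.sum_le_sum (fun s _ => hw s)
      _ = (Fintype.card (List.Vector (Fin 3) n)) * R := by
          rw [Finset.sum_const, nsmul_eq_mul]; simp
      _ = 3 ^ n * R := by rw [card_vector]; norm_num
  calc (lambdaCount n : ℝ) ≤ (Fintype.card (X n) : ℝ) := by exact_mod_cast h1
    _ ≤ 3 ^ n * R := h2



open Filter


-- (x+1-u) log u ≤ (x+1)(log((x+1)/K) - 1) + x/log x,  K = 1 + log(x/log x)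
lemma step2 (x u : ℝ) (hx : 3 ≤ x) (hu : 1 ≤ u) :
    (x + 1 - u) * Real.log u ≤
      (x + 1) * (Real.log ((x + 1) / (1 + Real.log (x / Real.log x))) - 1) + x / Real.log x := by
  have hx0 : (0:ℝ) < x := by linarith
  have hL1 : 1 < Real.log x := by
    have h3 : Real.exp 1 < 3 := by
      have := Real.exp_one_lt_d9; linarith
    have : Real.exp 1 < x := by linarith
    linarith [(Real.lt_log_iff_exp_lt hx0).mpr this]
  have hL0 : 0 < Real.log x := by linarith
  have hLx : Real.log x < x := by
    have := Real.log_le_sub_one_of_pos hx0; linarith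
  set c : ℝ := x / Real.log x with hc
  have hc1 : 1 < c := (one_lt_div hL0).mpr hLx
  have hc0 : 0 < c := by linarith
  have hlogc : 0 < Real.log c := Real.log_pos hc1
  set K : ℝ := 1 + Real.log c with hK
  have hK0 : 0 < K := by simp only [hK]; linarith
  set s : ℝ := (x + 1) / K with hs
  have hs0 : 0 < s := div_pos (by linarith) hK0
  have hu0 : (0:ℝ) < u := by linarith
  -- h1 : u * log c + u - c ≤ u * log u
  have h1 : u * Real.log c + u - c ≤ u * Real.log u := by
    have hcu : 0 < c / u := div_pos hc0 hu0
    have := Real.log_le_sub_one_of_pos hcu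
    rw [Real.log_div (ne_of_gt hc0) (ne_of_gt hu0)] at this
    have h1' := mul_le_mul_of_nonneg_left this (le_of_lt hu0)
    have h5 : u * (c / u - 1) = c - u := by field_simp
    rw [h5] at h1'
    nlinarith
  -- h2 : log u ≤ log s + u/s - 1
  have h2 : Real.log u ≤ Real.log s + u / s - 1 := by
    have hus : 0 < u / s := div_pos hu0 hs0
    have := Real.log_le_sub_one_of_pos hus
    rw [Real.log_div (ne_of_gt hu0) (ne_of_gt hs0)] at this
    linarith
  have h3 : (x + 1) * (u / s) = u * K := by
    rw [hs]; field_simp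
  have h4 : (x + 1) * Real.log u ≤ (x + 1) * (Real.log s + u / s - 1) :=
    mul_le_mul_of_nonneg_left h2 (by linarith)
  calc (x + 1 - u) * Real.log u = (x + 1) * Real.log u - u * Real.log u := by ring
    _ ≤ (x + 1) * (Real.log s + u / s - 1) - (u * Real.log c + u - c) := sub_le_sub h4 h1
    _ = (x + 1) * (Real.log s - 1) + c := by linear_combination h3


lemma phi_le_psi (ε : ℝ) (hε : 0 < ε) : ∀ᶠ x : ℝ in atTop,
    ((x + 1) * (Real.log ((x + 1) / (1 + Real.log (x / Real.log x))) - 1) + x / Real.log x) / 2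
      ≤ x / 2 * (Real.log ((1 + ε) * x) - (1 + Real.log (Real.log x)))
          + x / (2 * Real.log x) * Real.log (Real.log x) - 3 / 2 * Real.log x := by
  have base : Tendsto (fun y : ℝ => Real.log y / y) atTop (nhds 0) := by
    have := Real.tendsto_pow_log_div_mul_add_atTop 1 0 1 one_ne_zero
    simpa using this
  have hlogtop := Real.tendsto_log_atTop
  have cLLL : Tendsto (fun x : ℝ => Real.log (Real.log x) / Real.log x) atTop (nhds 0) := by
    simpa [Function.comp_def] using base.comp hlogtop
  have cinvL : Tendsto (fun x : ℝ => 1 / Real.log x) atTop (nhds 0) := by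
    simpa [one_div, Pi.inv_def] using hlogtop.inv_tendsto_atTop
  have cinvx : Tendsto (fun x : ℝ => 1 / x) atTop (nhds (0:ℝ)) := by
    simpa [one_div] using tendsto_inv_atTop_zero
  have cLx : Tendsto (fun x : ℝ => Real.log x / x) atTop (nhds 0) := base
  have hlogcont : Tendsto Real.log (nhds 1) (nhds 0) := by
    have := (Real.continuousAt_log (by norm_num : (1:ℝ) ≠ 0)).tendsto
    simpa using this
  have c6 : Tendsto (fun x : ℝ => 1 / Real.log x + 1 - Real.log (Real.log x) / Real.log x)
      atTop (nhds 1) := by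
    have := (cinvL.add (tendsto_const_nhds : Filter.Tendsto (fun _ : ℝ => (1:ℝ)) atTop (nhds 1))).sub cLLL
    simpa using this
  have c7 : Tendsto (fun x : ℝ =>
      Real.log (1 / Real.log x + 1 - Real.log (Real.log x) / Real.log x)) atTop (nhds 0) :=
    hlogcont.comp c6
  have c8i : Tendsto (fun x : ℝ => 1 + 1 / x) atTop (nhds 1) := by
    simpa using tendsto_const_nhds.add cinvx
  have c8 : Tendsto (fun x : ℝ => Real.log (1 + 1 / x)) atTop (nhds 0) := hlogcont.comp c8i
  have t1 : Tendsto (fun x : ℝ => Real.log (x + 1) / (x + 1)) atTop (nhds 0) := by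
    simpa [Function.comp_def] using base.comp (tendsto_atTop_add_const_right atTop 1 tendsto_id)
  have t2 : Tendsto (fun x : ℝ => (x + 1) / x) atTop (nhds 1) := by
    refine c8i.congr' ?_
    filter_upwards [eventually_gt_atTop (0:ℝ)] with x hx
    field_simp
  have c9 : Tendsto (fun x : ℝ => Real.log (x + 1) / x) atTop (nhds 0) := by
    have hm := t1.mul t2
    rw [zero_mul] at hm
    refine hm.congr' ?_
    filter_upwards [eventually_gt_atTop (0:ℝ)] with x hx
    field_simp
  have hA : Tendsto (fun x : ℝ => Real.log (Real.log x) / x) atTop (nhds 0) := by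
    have hm := cLLL.mul cLx
    rw [zero_mul] at hm
    refine hm.congr' ?_
    filter_upwards [eventually_gt_atTop (1:ℝ)] with x hx
    have hL : Real.log x ≠ 0 := ne_of_gt (Real.log_pos hx)
    field_simp
  have c10 : Tendsto (fun x : ℝ => Real.log (1 + Real.log (x / Real.log x)) / x)
      atTop (nhds 0) := by
    have hm := hA.add (c7.mul cinvx)
    rw [zero_mul, add_zero] at hm
    refine hm.congr' ?_
    filter_upwards [eventually_ge_atTop (3:ℝ)] with x hx
    have hx0 : (0:ℝ) < x := by linarith
    have hL1 : 1 < Real.log x := by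
      have h3 : Real.exp 1 < 3 := by have := Real.exp_one_lt_d9; linarith
      linarith [(Real.lt_log_iff_exp_lt hx0).mpr (by linarith : Real.exp 1 < x)]
    have hL0 : 0 < Real.log x := by linarith
    have hLL0 : 0 ≤ Real.log (Real.log x) := Real.log_nonneg (by linarith)
    have hLx : Real.log x < x := by
      have := Real.log_le_sub_one_of_pos hx0; linarith
    have hxL : Real.log (x / Real.log x) = Real.log x - Real.log (Real.log x) :=
      Real.log_div (ne_of_gt hx0) (ne_of_gt hL0)
    have hLLlt : Real.log (Real.log x) < Real.log x := by
      have := Real.log_le_sub_one_of_pos hL0; linarith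
    have hinner : (0:ℝ) < 1 / Real.log x + 1 - Real.log (Real.log x) / Real.log x := by
      rw [div_add' _ _ _ (ne_of_gt hL0), ← sub_div]
      refine div_pos ?_ hL0
      linarith
    have key : 1 + Real.log (x / Real.log x)
        = Real.log x * (1 / Real.log x + 1 - Real.log (Real.log x) / Real.log x) := by
      rw [hxL]; field_simp; ring
    rw [key, Real.log_mul (ne_of_gt hL0) (ne_of_gt hinner)]
    ring
  -- the bracket tends to 0
  have hb : Tendsto (fun x : ℝ =>
      (Real.log (1 / Real.log x + 1 - Real.log (Real.log x) / Real.log x)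
        - Real.log (1 + 1 / x))
      + Real.log (Real.log x) / Real.log x - 3 * (Real.log x / x)
      - (Real.log (x + 1) - Real.log (1 + Real.log (x / Real.log x)) - 1) / x
      - 1 / Real.log x) atTop (nhds 0) := by
    have e2 : Tendsto (fun x : ℝ =>
        (Real.log (x + 1) - Real.log (1 + Real.log (x / Real.log x)) - 1) / x)
        atTop (nhds 0) := by
      have := (c9.sub c10).sub cinvx
      rw [sub_zero, sub_zero] at this
      refine this.congr (fun x => by ring)
    have e1 := (((c7.sub c8).add cLLL).sub (cLx.const_mul 3)).sub e2
    have := e1.sub cinvL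
    have h0 : ((((((0:ℝ) - 0) + 0) - 3 * 0) - 0) - 0) = 0 := by norm_num
    simpa [h0, mul_comm] using this
  have hg : Tendsto (fun x : ℝ => Real.log (1 + ε) / 2 + (1/2) *
      ((Real.log (1 / Real.log x + 1 - Real.log (Real.log x) / Real.log x)
        - Real.log (1 + 1 / x))
      + Real.log (Real.log x) / Real.log x - 3 * (Real.log x / x)
      - (Real.log (x + 1) - Real.log (1 + Real.log (x / Real.log x)) - 1) / x
      - 1 / Real.log x)) atTop (nhds (Real.log (1 + ε) / 2)) := by
    have := (tendsto_const_nhds : Filter.Tendsto (fun _ : ℝ => Real.log (1+ε)/2) atTop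
      (nhds (Real.log (1+ε)/2))).add (hb.const_mul (1/2))
    simpa using this
  have hpos : 0 < Real.log (1 + ε) / 2 := by
    have := Real.log_pos (by linarith : (1:ℝ) < 1 + ε)
    linarith
  filter_upwards [hg.eventually (eventually_gt_nhds hpos), eventually_ge_atTop (3:ℝ)]
    with x hgx hx3
  -- identity : (ψ x - φ x)/x = g x
  have hx0 : (0:ℝ) < x := by linarith
  have hL1 : 1 < Real.log x := by
    have h3 : Real.exp 1 < 3 := by have := Real.exp_one_lt_d9; linarith
    linarith [(Real.lt_log_iff_exp_lt hx0).mpr (by linarith : Real.exp 1 < x)]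
  have hL0 : 0 < Real.log x := by linarith
  have hLL0 : 0 ≤ Real.log (Real.log x) := Real.log_nonneg (by linarith)
  have hLLlt : Real.log (Real.log x) < Real.log x := by
    have := Real.log_le_sub_one_of_pos hL0; linarith
  have hxL : Real.log (x / Real.log x) = Real.log x - Real.log (Real.log x) :=
    Real.log_div (ne_of_gt hx0) (ne_of_gt hL0)
  have hK0 : (0:ℝ) < 1 + (Real.log x - Real.log (Real.log x)) := by linarith
  have hlog1 : Real.log ((1 + ε) * x) = Real.log (1 + ε) + Real.log x :=
    Real.log_mul (by linarith) (ne_of_gt hx0)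
  have hlog2 : Real.log ((x + 1) / (1 + (Real.log x - Real.log (Real.log x))))
      = Real.log (x + 1) - Real.log (1 + (Real.log x - Real.log (Real.log x))) :=
    Real.log_div (by linarith) (ne_of_gt hK0)
  have hlog3 : Real.log (1 / Real.log x + 1 - Real.log (Real.log x) / Real.log x)
      = Real.log (1 + (Real.log x - Real.log (Real.log x))) - Real.log (Real.log x) := by
    have harg : 1 / Real.log x + 1 - Real.log (Real.log x) / Real.log x
        = (1 + (Real.log x - Real.log (Real.log x))) / Real.log x := by
      field_simp
      ring
    rw [harg, Real.log_div (ne_of_gt hK0) (ne_of_gt hL0)]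
  have hlog4 : Real.log (1 + 1 / x) = Real.log (x + 1) - Real.log x := by
    have harg : 1 + 1 / x = (x + 1) / x := by field_simp
    rw [harg, Real.log_div (by linarith) (ne_of_gt hx0)]
  rw [hxL] at hgx
  rw [hlog3, hlog4] at hgx
  rw [hxL, hlog2, hlog1]
  -- now reduce to linear arithmetic from hgx (multiplied by x)
  set L := Real.log x
  set LL := Real.log L
  set A := Real.log (x + 1)
  set B := Real.log (1 + (L - LL))
  set E := Real.log (1 + ε)
  have hgx' : 0 < E / 2 + 1/2 * ((B - LL - (A - L)) + LL / L - 3 * (L / x)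
      - (A - B - 1) / x - 1 / L) := hgx
  have hid : ((x / 2 * (E + L - (1 + LL)) + x / (2 * L) * LL - 3 / 2 * L)
      - ((x + 1) * (A - B - 1) + x / L) / 2) / x
      = E / 2 + 1/2 * ((B - LL - (A - L)) + LL / L - 3 * (L / x)
      - (A - B - 1) / x - 1 / L) := by
    field_simp
    ring
  have hd : 0 < ((x / 2 * (E + L - (1 + LL)) + x / (2 * L) * LL - 3 / 2 * L)
      - ((x + 1) * (A - B - 1) + x / L) / 2) / x := by rw [hid]; exact hgx'
  have := (div_pos_iff.mp hd)
  rcases this with ⟨h1, _⟩ | ⟨_, h2⟩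
  · linarith [h1]
  · linarith


lemma key (ε : ℝ) (hε : 0 < ε) : ∃ N : ℕ, ∀ n : ℕ, N ≤ n → ∀ u a : ℕ, 2 * a + u = n + 1 →
    ((u : ℝ)) ^ a ≤ ((1 + ε) * n / (Real.exp 1 * Real.log n)) ^ ((n : ℝ) / 2)
      * (Real.log n) ^ ((n : ℝ) / (2 * Real.log n)) / (n : ℝ) ^ ((3 : ℝ) / 2) := by
  have hevN : ∀ᶠ n : ℕ in atTop,
      (((n : ℝ) + 1) * (Real.log (((n : ℝ) + 1) / (1 + Real.log ((n : ℝ) / Real.log n))) - 1)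
          + (n : ℝ) / Real.log n) / 2
        ≤ (n : ℝ) / 2 * (Real.log ((1 + ε) * n) - (1 + Real.log (Real.log n)))
          + (n : ℝ) / (2 * Real.log n) * Real.log (Real.log n) - 3 / 2 * Real.log n :=
    tendsto_natCast_atTop_atTop.eventually (phi_le_psi ε hε)
  obtain ⟨N, hN⟩ := Filter.eventually_atTop.mp (hevN.and (eventually_ge_atTop 3))
  refine ⟨N, fun n hn u a hua => ?_⟩
  obtain ⟨hφψ, hn3⟩ := hN n hn
  have hx3 : (3 : ℝ) ≤ (n : ℝ) := by exact_mod_cast hn3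
  have hn0 : (0 : ℝ) < n := by linarith
  have hL1 : 1 < Real.log n := by
    have h3 : Real.exp 1 < 3 := by have := Real.exp_one_lt_d9; linarith
    linarith [(Real.lt_log_iff_exp_lt hn0).mpr (by linarith : Real.exp 1 < (n : ℝ))]
  have hL0 : 0 < Real.log n := by linarith
  have hA0 : (0 : ℝ) < (1 + ε) * n / (Real.exp 1 * Real.log n) :=
    div_pos (mul_pos (by linarith) hn0) (mul_pos (Real.exp_pos 1) hL0)
  have hRpos : (0 : ℝ) < ((1 + ε) * n / (Real.exp 1 * Real.log n)) ^ ((n : ℝ) / 2)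
      * (Real.log n) ^ ((n : ℝ) / (2 * Real.log n)) / (n : ℝ) ^ ((3 : ℝ) / 2) :=
    div_pos (mul_pos (Real.rpow_pos_of_pos hA0 _) (Real.rpow_pos_of_pos hL0 _))
      (Real.rpow_pos_of_pos hn0 _)
  rcases Nat.eq_zero_or_pos u with rfl | hu
  · have ha : a ≠ 0 := by omega
    rw [Nat.cast_zero, zero_pow ha]
    exact le_of_lt hRpos
  · have hu1 : (1 : ℝ) ≤ (u : ℝ) := by exact_mod_cast hu
    have hupos : (0 : ℝ) < u := by linarith
    have hstep := step2 (n : ℝ) (u : ℝ) hx3 hu1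
    have ha2 : 2 * (a : ℝ) = (n : ℝ) + 1 - (u : ℝ) := by
      have : ((2 * a + u : ℕ) : ℝ) = ((n + 1 : ℕ) : ℝ) := by rw [hua]
      push_cast at this
      linarith
    have hlogu0 : 0 ≤ Real.log u := Real.log_nonneg hu1
    have hchain : (a : ℝ) * Real.log u
        ≤ (n : ℝ) / 2 * (Real.log ((1 + ε) * n) - (1 + Real.log (Real.log n)))
          + (n : ℝ) / (2 * Real.log n) * Real.log (Real.log n) - 3 / 2 * Real.log n := by
      have h1 : (a : ℝ) * Real.log u = (((n : ℝ) + 1 - u) * Real.log u) / 2 := by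
        rw [← ha2]; ring
      rw [h1]
      have h2 : (((n : ℝ) + 1 - u) * Real.log u) / 2
          ≤ (((n : ℝ) + 1) * (Real.log (((n : ℝ) + 1) / (1 + Real.log ((n : ℝ) / Real.log n))) - 1)
            + (n : ℝ) / Real.log n) / 2 := by linarith
      linarith
    have hlogR : Real.log (((1 + ε) * n / (Real.exp 1 * Real.log n)) ^ ((n : ℝ) / 2)
        * (Real.log n) ^ ((n : ℝ) / (2 * Real.log n)) / (n : ℝ) ^ ((3 : ℝ) / 2))
        = (n : ℝ) / 2 * (Real.log ((1 + ε) * n) - (1 + Real.log (Real.log n)))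
          + (n : ℝ) / (2 * Real.log n) * Real.log (Real.log n) - 3 / 2 * Real.log n := by
      rw [Real.log_div (ne_of_gt (mul_pos (Real.rpow_pos_of_pos hA0 _)
            (Real.rpow_pos_of_pos hL0 _))) (ne_of_gt (Real.rpow_pos_of_pos hn0 _)),
          Real.log_mul (ne_of_gt (Real.rpow_pos_of_pos hA0 _))
            (ne_of_gt (Real.rpow_pos_of_pos hL0 _)),
          Real.log_rpow hA0, Real.log_rpow hL0, Real.log_rpow hn0,
          Real.log_div (ne_of_gt (mul_pos (by linarith : (0:ℝ) < 1 + ε) hn0))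
            (ne_of_gt (mul_pos (Real.exp_pos 1) hL0)),
          Real.log_mul (ne_of_gt (Real.exp_pos 1)) (ne_of_gt hL0), Real.log_exp]
      try ring
    have hfin : (u : ℝ) ^ a = Real.exp ((a : ℝ) * Real.log u) := by
      rw [← Real.rpow_natCast, Real.rpow_def_of_pos hupos, mul_comm]
    rw [hfin, ← Real.exp_log hRpos]
    exact Real.exp_le_exp.mpr (le_trans hchain (le_of_eq hlogR.symm))

end LamProof

/-- For every `ε > 0` there is `c₂ > 0` such that for all sufficiently large `n`,
`λ_n ≤ c₂ (9(1+ε)n/(e log n))^{n/2} (log n)^{n/(2 log n)} / n^{3/2}`. -/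
theorem lambda_upper_bound :
    ∀ ε : ℝ, 0 < ε → ∃ c₂ : ℝ, 0 < c₂ ∧ ∃ N : ℕ, ∀ n : ℕ, N ≤ n →
      (lambdaCount n : ℝ) ≤
        c₂ * (9 * (1 + ε) * n / (Real.exp 1 * Real.log n)) ^ ((n : ℝ) / 2) *
          (Real.log n) ^ ((n : ℝ) / (2 * Real.log n)) / (n : ℝ) ^ ((3 : ℝ) / 2) := by
  intro ε hε
  obtain ⟨N, hN⟩ := LamProof.key ε hε
  refine ⟨1, one_pos, max N 3, fun n hn => ?_⟩
  have hnN : N ≤ n := le_trans (le_max_left _ _) hn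
  have hn3 : 3 ≤ n := le_trans (le_max_right _ _) hn
  have hx3 : (3 : ℝ) ≤ (n : ℝ) := by exact_mod_cast hn3
  have hn0 : (0 : ℝ) < n := by linarith
  have hL1 : 1 < Real.log n := by
    have h3 : Real.exp 1 < 3 := by have := Real.exp_one_lt_d9; linarith
    linarith [(Real.lt_log_iff_exp_lt hn0).mpr (by linarith : Real.exp 1 < (n : ℝ))]
  have hL0 : 0 < Real.log n := by linarith
  have hA0 : (0 : ℝ) < (1 + ε) * n / (Real.exp 1 * Real.log n) :=
    div_pos (mul_pos (by linarith) hn0) (mul_pos (Real.exp_pos 1) hL0)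
  set R : ℝ := ((1 + ε) * n / (Real.exp 1 * Real.log n)) ^ ((n : ℝ) / 2)
      * (Real.log n) ^ ((n : ℝ) / (2 * Real.log n)) / (n : ℝ) ^ ((3 : ℝ) / 2) with hRdef
  have hRpos : (0 : ℝ) < R :=
    div_pos (mul_pos (Real.rpow_pos_of_pos hA0 _) (Real.rpow_pos_of_pos hL0 _))
      (Real.rpow_pos_of_pos hn0 _)
  have hmain := LamProof.main_card n R (le_of_lt hRpos) (hN n hnN)
  have heq : (3 : ℝ) ^ n * R
      = 1 * (9 * (1 + ε) * n / (Real.exp 1 * Real.log n)) ^ ((n : ℝ) / 2) *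
          (Real.log n) ^ ((n : ℝ) / (2 * Real.log n)) / (n : ℝ) ^ ((3 : ℝ) / 2) := by
    have h9 : 9 * (1 + ε) * (n : ℝ) / (Real.exp 1 * Real.log n)
        = 9 * ((1 + ε) * n / (Real.exp 1 * Real.log n)) := by ring
    rw [h9, Real.mul_rpow (by norm_num) (le_of_lt hA0)]
    have h3 : (9 : ℝ) ^ ((n : ℝ) / 2) = (3 : ℝ) ^ n := by
      rw [show (9 : ℝ) = (3 : ℝ) ^ (2 : ℝ) by norm_num,
        ← Real.rpow_natCast 3 n, ← Real.rpow_mul (by norm_num : (0:ℝ) ≤ 3)]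
      rw [show (2:ℝ) * ((n:ℝ)/2) = (n:ℝ) by ring]
    rw [h3, hRdef]
    ring
  rw [← heq]
  exact hmain
end

section
/- Let p ≥ 2 and let (φ_n)_{n≥1} be defined by φ_1 = C_{p-1} > 0 and φ_n = ∑_{l=1}^{n-1} φ_l φ_{n-1-l} + Q_p(n-1)φ_{n-1} for n ≥ 2 (with φ_0 = 0). Set Γ_j = (∑_{l=1}^{j} φ_l φ_{j-l}) / φ_j for j ≥ 1. Then the infinite product K_p = ∏_{j=1}^{∞} (1 + Γ_j / Q_p(j)) converges to a finite positive limit; consequently φ_n / (C_{p-1} ∏_{j=1}^{n-1} Q_p(j)) converges to a finite positive limit a_p = K_p as n → ∞. -/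
set_option maxHeartbeats 1600000

open Finset Filter

lemma two_mul_factorial_le_pow : ∀ p : ℕ, 2 ≤ p → 2 * Nat.factorial p ≤ p ^ p := by
  intro p hp
  induction p, hp using Nat.le_induction with
  | base => decide
  | succ n hn ih =>
    calc 2 * Nat.factorial (n + 1) = (n + 1) * (2 * Nat.factorial n) := by
          rw [Nat.factorial_succ]; ring
      _ ≤ (n + 1) * n ^ n := Nat.mul_le_mul_left _ ih
      _ ≤ (n + 1) * (n + 1) ^ n := Nat.mul_le_mul_left _ (Nat.pow_le_pow_left (Nat.le_succ n) n)
      _ = (n + 1) ^ (n + 1) := (pow_succ' _ _).symm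

lemma catalan_le_four_pow (n : ℕ) : catalan n ≤ 4 ^ n := by
  rw [catalan_eq_centralBinom_div]
  calc n.centralBinom / (n + 1) ≤ n.centralBinom := Nat.div_le_self _ _
    _ = (2 * n).choose n := Nat.centralBinom_eq_two_mul_choose n
    _ ≤ (2 * n + 1).choose n := Nat.choose_le_choose n (Nat.le_succ _)
    _ ≤ 4 ^ n := Nat.choose_middle_le_pow n

lemma catalan_pos' (n : ℕ) : 0 < catalan n := by
  have h := succ_mul_catalan_eq_centralBinom n
  have h2 := Nat.centralBinom_pos n
  by_contra hc
  push_neg at hc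
  interval_cases c : catalan n
  omega

/-- `Q_p(j) = (2^p/p!) ∏_{k=1}^p ((2p+1)j + 2p - 1 - 2k)`. -/
noncomputable def Qpoly (p j : ℕ) : ℝ :=
  (2 ^ p / (Nat.factorial p : ℝ)) *
    ∏ k ∈ Finset.Icc 1 p, (((2 * p + 1) * j : ℝ) + 2 * p - 1 - 2 * k)

lemma Qpoly_factor_ge {p j k : ℕ} (hj : 1 ≤ j) (hk : k ∈ Finset.Icc 1 p) :
    (2 * p * j : ℝ) ≤ ((2 * p + 1) * j : ℝ) + 2 * p - 1 - 2 * k := by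
  simp only [Finset.mem_Icc] at hk
  have h1 : (1 : ℝ) ≤ (j : ℝ) := by exact_mod_cast hj
  have h2 : (k : ℝ) ≤ (p : ℝ) := by exact_mod_cast hk.2
  nlinarith

lemma Qpoly_factor_nonneg {p j k : ℕ} (hj : 1 ≤ j) (hk : k ∈ Finset.Icc 1 p) :
    (0 : ℝ) ≤ ((2 * p + 1) * j : ℝ) + 2 * p - 1 - 2 * k := by
  have h := Qpoly_factor_ge (p := p) hj hk
  have : (0:ℝ) ≤ 2 * p * j := by positivity
  linarith

lemma Qpoly_pos {p j : ℕ} (hj : 1 ≤ j) : 0 < Qpoly p j := by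
  apply mul_pos
  · positivity
  · apply Finset.prod_pos
    intro k hk
    have h := Qpoly_factor_ge (p := p) hj hk
    simp only [Finset.mem_Icc] at hk
    have hp1 : 1 ≤ p := le_trans hk.1 hk.2
    have : (0:ℝ) < 2 * p * j := by
      have h5 : (1:ℝ) ≤ p := by exact_mod_cast hp1
      have h6 : (1:ℝ) ≤ (j:ℝ) := by exact_mod_cast hj
      nlinarith
    linarith

lemma Qpoly_mono {p a b : ℕ} (ha : 1 ≤ a) (hab : a ≤ b) : Qpoly p a ≤ Qpoly p b := by
  unfold Qpoly
  apply mul_le_mul_of_nonneg_left _ (by positivity)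
  apply Finset.prod_le_prod
  · intro k hk; exact Qpoly_factor_nonneg ha hk
  · intro k hk
    have hab' : (a : ℝ) ≤ (b : ℝ) := by exact_mod_cast hab
    have hp : (0:ℝ) ≤ 2 * p + 1 := by positivity
    nlinarith

lemma Qpoly_lb {p j : ℕ} (hp : 2 ≤ p) (hj : 1 ≤ j) :
    8 * (catalan (p - 1) : ℝ) * (j : ℝ) ^ 2 ≤ Qpoly p j := by
  have hstep : (2 ^ p / (Nat.factorial p : ℝ)) * (2 * p * j : ℝ) ^ p ≤ Qpoly p j := by
    unfold Qpoly
    apply mul_le_mul_of_nonneg_left _ (by positivity)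
    calc ((2 * p * j : ℝ)) ^ p = ∏ _k ∈ Finset.Icc 1 p, (2 * p * j : ℝ) := by
          rw [Finset.prod_const, Nat.card_Icc]; norm_num
      _ ≤ _ := Finset.prod_le_prod (fun k _ => by positivity)
            (fun k hk => Qpoly_factor_ge hj hk)
  refine le_trans ?_ hstep
  have hC : (catalan (p-1) : ℝ) ≤ 4 ^ (p-1) := by exact_mod_cast catalan_le_four_pow (p-1)
  have hfac : (2 : ℝ) * Nat.factorial p ≤ (p:ℝ) ^ p := by exact_mod_cast two_mul_factorial_le_pow p hp
  have hfacpos : (0:ℝ) < Nat.factorial p := by positivity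
  have hj1 : (1:ℝ) ≤ (j:ℝ) := by exact_mod_cast hj
  have hjp : (j:ℝ) ^ 2 ≤ (j:ℝ) ^ p := pow_le_pow_right₀ hj1 hp
  have hexp : (2 * p * j : ℝ) ^ p = 2 ^ p * (p:ℝ) ^ p * (j:ℝ) ^ p := by
    rw [mul_pow, mul_pow]
  have h4 : (4:ℝ) ^ p = 4 * 4 ^ (p-1) := by
    rw [← pow_succ']
    congr 1
    omega
  have key : 2 * (4:ℝ) ^ p ≤ (2 ^ p / (Nat.factorial p : ℝ)) * (2 ^ p * (p:ℝ) ^ p) := by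
    rw [div_mul_eq_mul_div, le_div_iff₀ hfacpos]
    have h44 : (2:ℝ)^p * 2^p = 4^p := by rw [← mul_pow]; norm_num
    calc 2 * (4:ℝ)^p * Nat.factorial p = 4^p * (2 * Nat.factorial p) := by ring
      _ ≤ 4 ^ p * (p:ℝ)^p := mul_le_mul_of_nonneg_left hfac (by positivity)
      _ = 2 ^ p * (2 ^ p * (p:ℝ)^p) := by rw [← h44]; ring
  calc 8 * (catalan (p - 1) : ℝ) * (j : ℝ) ^ 2 ≤ 8 * 4 ^ (p-1) * (j:ℝ)^p := by
        apply mul_le_mul _ hjp (by positivity) (by positivity)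
        nlinarith [(by exact_mod_cast (catalan_pos' (p-1)) : (0:ℝ) < catalan (p-1))]
    _ = 2 * 4 ^ p * (j:ℝ)^p := by rw [h4]; ring
    _ ≤ (2 ^ p / (Nat.factorial p : ℝ)) * (2 ^ p * (p:ℝ) ^ p) * (j:ℝ)^p := by
        apply mul_le_mul_of_nonneg_right key (by positivity)
    _ = (2 ^ p / (Nat.factorial p : ℝ)) * (2 * p * j : ℝ) ^ p := by rw [hexp]; ring

/-- Let `p ≥ 2`, `φ_0 = 0`, `φ_1 = C_{p-1}`, and
`φ_n = ∑_{l=1}^{n-1} φ_l φ_{n-1-l} + Q_p(n-1)φ_{n-1}` for `n ≥ 2`. With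
`Γ_j = (∑_{l=1}^j φ_l φ_{j-l})/φ_j`, the infinite product
`K_p = ∏_{j≥1} (1 + Γ_j/Q_p(j))` converges to a finite positive limit; consequently
`φ_n/(C_{p-1} ∏_{j=1}^{n-1} Q_p(j))` converges to the same finite positive limit
`a_p = K_p`. -/
theorem phi_asymptotic_constant (p : ℕ) (hp : 2 ≤ p) (φ : ℕ → ℝ)
    (h0 : φ 0 = 0) (h1 : φ 1 = (catalan (p - 1) : ℝ))
    (hrec : ∀ n, 2 ≤ n →
      φ n = (∑ l ∈ Finset.Icc 1 (n - 1), φ l * φ (n - 1 - l)) + Qpoly p (n - 1) * φ (n - 1)) :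
    ∃ K : ℝ, 0 < K ∧
      Filter.Tendsto
        (fun n : ℕ => ∏ j ∈ Finset.Icc 1 n,
          (1 + ((∑ l ∈ Finset.Icc 1 j, φ l * φ (j - l)) / φ j) / Qpoly p j))
        Filter.atTop (nhds K) ∧
      Filter.Tendsto
        (fun n : ℕ => φ n / ((catalan (p - 1) : ℝ) * ∏ j ∈ Finset.Icc 1 (n - 1), Qpoly p j))
        Filter.atTop (nhds K) := by
  set C : ℝ := (catalan (p - 1) : ℝ) with hCdef
  have hCpos : 0 < C := by
    rw [hCdef]; exact_mod_cast catalan_pos' (p - 1)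
  have hC1 : (1:ℝ) ≤ C := by
    rw [hCdef]; exact_mod_cast catalan_pos' (p - 1)
  set Q : ℕ → ℝ := Qpoly p with hQdef
  set Γ : ℕ → ℝ := fun j => (∑ l ∈ Finset.Icc 1 j, φ l * φ (j - l)) / φ j with hΓdef
  set u : ℕ → ℝ := fun n => ∏ j ∈ Finset.Icc 1 n, (1 + Γ j / Q j) with hudef
  set W : ℕ → ℝ := fun n => ∏ j ∈ Finset.Icc 1 n, Q j with hWdef
  clear_value C Q Γ u W
  have hQpos : ∀ j, 1 ≤ j → 0 < Q j := fun j hj => by rw [hQdef]; exact Qpoly_pos hj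
  have hQmono : ∀ a b, 1 ≤ a → a ≤ b → Q a ≤ Q b := fun a b ha hab => by
    rw [hQdef]; exact Qpoly_mono ha hab
  have hQlb : ∀ j : ℕ, 1 ≤ j → 8 * C * (j:ℝ)^2 ≤ Q j := fun j hj => by
    rw [hQdef, hCdef]; exact Qpoly_lb hp hj
  -- positivity of φ
  have hφpos : ∀ n, 1 ≤ n → 0 < φ n := by
    intro n
    induction n using Nat.strong_induction_on with
    | _ n ih =>
      intro hn
      rcases eq_or_lt_of_le hn with h|h
      · rw [← h, h1]; exact hCpos
      · have h2 : 2 ≤ n := h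
        rw [hrec n h2]
        have hsum : 0 ≤ ∑ l ∈ Finset.Icc 1 (n-1), φ l * φ (n-1-l) := by
          apply Finset.sum_nonneg
          intro l hl
          simp only [Finset.mem_Icc] at hl
          apply mul_nonneg
          · exact le_of_lt (ih l (by omega) hl.1)
          · rcases Nat.eq_zero_or_pos (n-1-l) with h0'|h1'
            · rw [h0', h0]
            · exact le_of_lt (ih _ (by omega) h1')
        have hQφ : 0 < Q (n-1) * φ (n-1) :=
          mul_pos (hQpos _ (by omega)) (ih (n-1) (by omega) (by omega))
        linarith
  have hφnn : ∀ n, 0 ≤ φ n := by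
    intro n
    rcases Nat.eq_zero_or_pos n with h|h
    · rw [h, h0]
    · exact (hφpos n h).le
  have hΓnn : ∀ j, 0 ≤ Γ j := by
    intro j
    simp only [hΓdef]
    apply div_nonneg _ (hφnn j)
    exact Finset.sum_nonneg fun l _ => mul_nonneg (hφnn l) (hφnn _)
  have hone_le : ∀ j, 1 ≤ j → (1:ℝ) ≤ 1 + Γ j / Q j := by
    intro j hj
    have := div_nonneg (hΓnn j) (hQpos j hj).le
    linarith
  have hupos : ∀ n, 0 < u n := by
    intro n
    simp only [hudef]
    apply Finset.prod_pos
    intro j hj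
    simp only [Finset.mem_Icc] at hj
    exact lt_of_lt_of_le one_pos (hone_le j hj.1)
  have husucc : ∀ n, u (n+1) = u n * (1 + Γ (n+1) / Q (n+1)) := by
    intro n
    simp only [hudef]
    exact Finset.prod_Icc_succ_top (by omega) _
  have humono : Monotone u := by
    apply monotone_nat_of_le_succ
    intro n
    rw [husucc n]
    exact le_mul_of_one_le_right (hupos n).le (hone_le (n+1) (by omega))
  have hWpos : ∀ n, 0 < W n := by
    intro n
    simp only [hWdef]
    apply Finset.prod_pos
    intro j hj
    simp only [Finset.mem_Icc] at hj
    exact hQpos j hj.1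
  -- fundamental identity
  have hId : ∀ m, φ (m+1) = C * (W m * u m) := by
    intro m
    induction m with
    | zero =>
      have hW0 : W 0 = 1 := by simp only [hWdef]; simp
      have hu0 : u 0 = 1 := by simp only [hudef]; simp
      rw [hW0, hu0, h1]; ring
    | succ m ih =>
      have hr := hrec (m+2) (by omega)
      have e1 : m + 2 - 1 = m + 1 := rfl
      rw [e1] at hr
      have hφne : φ (m+1) ≠ 0 := ne_of_gt (hφpos (m+1) (by omega))
      have hΓmul : Γ (m+1) * φ (m+1) = ∑ l ∈ Finset.Icc 1 (m+1), φ l * φ (m+1-l) := by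
        simp only [hΓdef]
        exact div_mul_cancel₀ _ hφne
      have hQne : Q (m+1) ≠ 0 := ne_of_gt (hQpos (m+1) (by omega))
      have hWs : W (m+1) = W m * Q (m+1) := by
        simp only [hWdef]; exact Finset.prod_Icc_succ_top (by omega) _
      rw [hr, ← hΓmul, ih, hWs, husucc m]
      field_simp
      ring
  -- product splitting inequality
  have hWsplit : ∀ l n : ℕ, 1 ≤ l → l ≤ n → W (l-1) * W (n-l) * Q n ≤ W n := by
    intro l n hl hln
    obtain ⟨m, rfl⟩ : ∃ m, n = m + 1 := ⟨n - 1, by omega⟩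
    have hIcc : ∀ m : ℕ, Finset.Icc 1 m = Finset.Ioc 0 m := fun m => Finset.Icc_add_one_left_eq_Ioc 0 m
    have h1' : W (m+1) = W (m+1-l) * ∏ j ∈ Finset.Ioc (m+1-l) (m+1), Q j := by
      simp only [hWdef]
      simp only [hIcc]
      rw [Finset.prod_Ioc_consecutive _ (Nat.zero_le (m+1-l)) (Nat.sub_le (m+1) l)]
    have h2' : ∏ j ∈ Finset.Ioc (m+1-l) (m+1), Q j
        = (∏ j ∈ Finset.Ioc (m+1-l) m, Q j) * Q (m+1) :=
      Finset.prod_Ioc_succ_top (by omega) _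
    have h3' : W (l-1) ≤ ∏ j ∈ Finset.Ioc (m+1-l) m, Q j := by
      simp only [hWdef]
      simp only [hIcc]
      have e1 : Finset.Ioc 0 (l-1) = Finset.Ico 1 l := by
        rw [← Finset.Ico_add_one_add_one_eq_Ioc]; congr 1; omega
      have e2 : Finset.Ioc (m+1-l) m = Finset.Ico (m+1-l+1) (m+1) := by
        rw [← Finset.Ico_add_one_add_one_eq_Ioc]
      rw [e1, e2, Finset.prod_Ico_eq_prod_range, Finset.prod_Ico_eq_prod_range]
      have ecard : m + 1 - (m+1-l+1) = l - 1 := by omega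
      rw [ecard]
      apply Finset.prod_le_prod
      · intro i _
        exact (hQpos _ (by omega)).le
      · intro i _
        exact hQmono _ _ (by omega) (by omega)
    have hprodnn : (0:ℝ) ≤ ∏ j ∈ Finset.Ioc (m+1-l) m, Q j := by
      apply Finset.prod_nonneg
      intro j hj
      simp only [Finset.mem_Ioc] at hj
      exact (hQpos j (by omega)).le
    calc W (l-1) * W (m+1-l) * Q (m+1)
        ≤ (∏ j ∈ Finset.Ioc (m+1-l) m, Q j) * W (m+1-l) * Q (m+1) := by
          apply mul_le_mul_of_nonneg_right
            (mul_le_mul_of_nonneg_right h3' (hWpos _).le) (hQpos (m+1) (by omega)).le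
      _ = W (m+1-l) * ((∏ j ∈ Finset.Ioc (m+1-l) m, Q j) * Q (m+1)) := by ring
      _ = W (m+1-l) * ∏ j ∈ Finset.Ioc (m+1-l) (m+1), Q j := by rw [← h2']
      _ = W (m+1) := h1'.symm
  -- Gamma bound
  have hΓbd : ∀ n : ℕ, 1 ≤ n → Γ (n+1) ≤ C * u n * (n+1 : ℝ) / Q n := by
    intro n hn
    have hφn1 : 0 < φ (n+1) := hφpos _ (by omega)
    have hQn := hQpos n hn
    have hterm : ∀ l ∈ Finset.Icc 1 (n+1), φ l * φ (n+1-l) ≤ C * u n / Q n * φ (n+1) := by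
      intro l hl
      simp only [Finset.mem_Icc] at hl
      rcases eq_or_lt_of_le hl.2 with he|hlt
      · rw [he]
        simp only [Nat.sub_self, h0, mul_zero]
        exact mul_nonneg (div_nonneg (mul_nonneg hCpos.le (hupos n).le) hQn.le) hφn1.le
      · have hln : l ≤ n := by omega
        have e1 : φ l = C * (W (l-1) * u (l-1)) := by
          have := hId (l-1); rwa [show l-1+1 = l by omega] at this
        have e2 : φ (n+1-l) = C * (W (n-l) * u (n-l)) := by
          have := hId (n-l); rwa [show n-l+1 = n+1-l by omega] at this
        have e3 : φ (n+1) = C * (W n * u n) := hId n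
        rw [e1, e2, e3, div_mul_eq_mul_div, le_div_iff₀ hQn]
        have hu1 : u (l-1) ≤ u n := humono (by omega)
        have hu2 : u (n-l) ≤ u n := humono (by omega)
        have hW := hWsplit l n hl.1 hln
        have p3 := hupos (l-1)
        have p4 := hupos (n-l)
        have p5 := hupos n
        have p1 := hWpos (l-1)
        have p2 := hWpos (n-l)
        calc C * (W (l-1) * u (l-1)) * (C * (W (n-l) * u (n-l))) * Q n
            = (C*C) * ((u (l-1) * u (n-l)) * (W (l-1) * W (n-l) * Q n)) := by ring
          _ ≤ (C*C) * ((u n * u n) * W n) := by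
              apply mul_le_mul_of_nonneg_left _ (by positivity)
              apply mul_le_mul (mul_le_mul hu1 hu2 p4.le p5.le) hW (by positivity)
                (by positivity)
          _ = C * u n * (C * (W n * u n)) := by ring
    have hS : ∑ l ∈ Finset.Icc 1 (n+1), φ l * φ (n+1-l)
        ≤ (n+1 : ℝ) * (C * u n / Q n * φ (n+1)) := by
      have h := Finset.sum_le_card_nsmul _ _ _ hterm
      rw [Nat.card_Icc, nsmul_eq_mul] at h
      have e : ((n + 1 + 1 - 1 : ℕ) : ℝ) = (n:ℝ) + 1 := by push_cast; ring
      rwa [e] at h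
    have hΓexpr : Γ (n+1) = (∑ l ∈ Finset.Icc 1 (n+1), φ l * φ (n+1-l)) / φ (n+1) := by
      simp only [hΓdef]
    rw [hΓexpr]
    rw [div_le_iff₀ hφn1]
    calc (∑ l ∈ Finset.Icc 1 (n+1), φ l * φ (n+1-l))
        ≤ (n+1 : ℝ) * (C * u n / Q n * φ (n+1)) := hS
      _ = C * u n * (n+1 : ℝ) / Q n * φ (n+1) := by ring
  -- Riccati bound
  have hub : ∀ n : ℕ, 1 ≤ n → u n ≤ 1 / (1 - (1/64) * (1 - 1/(n:ℝ))) := by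
    intro n hn
    induction n, hn using Nat.le_induction with
    | base =>
      have hΓ1 : Γ 1 = 0 := by
        simp only [hΓdef]
        simp [h0]
      have hu1 : u 1 = 1 := by
        simp only [hudef]
        rw [Finset.Icc_self, Finset.prod_singleton, hΓ1]
        simp
      rw [hu1]
      norm_num
    | succ n hn ih =>
      have hn1 : (1:ℝ) ≤ (n:ℝ) := by exact_mod_cast hn
      have hnpos : (0:ℝ) < (n:ℝ) := by linarith
      have hn1pos : (0:ℝ) < (n:ℝ) + 1 := by linarith
      set t : ℝ := 1 - (1/64) * (1 - 1/(n:ℝ)) with htdef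
      set d : ℝ := (1/64) * (1/(n:ℝ) - 1/((n:ℝ)+1)) with hddef
      clear_value t d
      have hcast : ((n+1 : ℕ) : ℝ) = (n:ℝ) + 1 := by push_cast; ring
      have ht' : 1 - (1/64) * (1 - 1/(((n+1):ℕ):ℝ)) = t - d := by
        rw [hcast, htdef, hddef]; ring
      rw [ht']
      have hinv : 1/(n:ℝ) ≤ 1 := by
        rw [div_le_one hnpos]; exact hn1
      have htlb : (63:ℝ)/64 ≤ t := by
        rw [htdef]
        have : 0 ≤ 1/(n:ℝ) := by positivity
        nlinarith
      have htub : t ≤ 1 := by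
        rw [htdef]
        have : 0 ≤ 1 - 1/(n:ℝ) := by linarith
        nlinarith
      have hd0 : 0 ≤ d := by
        rw [hddef]
        have h := one_div_le_one_div_of_le hnpos (by linarith : (n:ℝ) ≤ (n:ℝ)+1)
        nlinarith
      have hdval : d = (1/64) * (1 / ((n:ℝ) * ((n:ℝ)+1))) := by
        rw [hddef]
        field_simp
        ring
      have hdub : d ≤ 1/64 := by
        rw [hdval]
        have h1' : (1:ℝ) ≤ (n:ℝ) * ((n:ℝ)+1) := by nlinarith
        have h2' : 1/((n:ℝ) * ((n:ℝ)+1)) ≤ 1 := by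
          rw [div_le_one (by nlinarith : (0:ℝ) < (n:ℝ)*((n:ℝ)+1))]
          exact h1'
        linarith
      have ht'lb : (1:ℝ)/2 ≤ t - d := by linarith
      have ht'pos : (0:ℝ) < t - d := by linarith
      have htpos : (0:ℝ) < t := by linarith
      -- step bound
      have hQn := hQpos n hn
      have hQn1 := hQpos (n+1) (by omega)
      have hγ : Γ (n+1) / Q (n+1) ≤ d * u n := by
        have hb := hΓbd n hn
        have h1' : Γ (n+1) / Q (n+1) ≤ (C * u n * ((n:ℝ)+1) / Q n) / Q (n+1) := by
          exact div_le_div_of_nonneg_right hb hQn1.le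
        refine le_trans h1' ?_
        have hupn := hupos n
        -- C * u n * (n+1) / (Q n * Q (n+1)) ≤ d * u n
        have hQnlb := hQlb n hn
        have hQn1lb := hQlb (n+1) (by omega)
        rw [hcast] at hQn1lb
        -- Q n ≥ 8 C n², Q (n+1) ≥ 8 C (n+1)²
        have h8 : (0:ℝ) < 8 * C * (n:ℝ)^2 := by positivity
        have h8' : (0:ℝ) < 8 * C * ((n:ℝ)+1)^2 := by positivity
        have hprod : 64 * C * ((n:ℝ)*((n:ℝ)+1))^2 * C ≤ Q n * Q (n+1) := by
          calc 64 * C * ((n:ℝ)*((n:ℝ)+1))^2 * C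
              = (8 * C * (n:ℝ)^2) * (8 * C * ((n:ℝ)+1)^2) := by ring
            _ ≤ Q n * Q (n+1) := by
                apply mul_le_mul hQnlb hQn1lb h8'.le (le_trans h8.le hQnlb)
        rw [div_div]
        rw [div_le_iff₀ (by positivity : (0:ℝ) < Q n * Q (n+1))]
        have hgoal : C * u n * ((n:ℝ)+1) ≤ d * u n * (64 * C * ((n:ℝ)*((n:ℝ)+1))^2 * C) := by
          rw [hdval]
          have hC2 : 1 ≤ C * (n:ℝ) := by nlinarith
          have expand : (1/64) * (1 / ((n:ℝ) * ((n:ℝ)+1))) * u n * (64 * C * ((n:ℝ)*((n:ℝ)+1))^2 * C)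
              = u n * C * ((n:ℝ)*((n:ℝ)+1)) * C := by
            field_simp
          rw [expand]
          have : C * u n * ((n:ℝ)+1) * (C * (n:ℝ)) ≥ C * u n * ((n:ℝ)+1) * 1 := by
            apply mul_le_mul_of_nonneg_left hC2 (by positivity)
          nlinarith [hupos n]
        calc C * u n * ((n:ℝ)+1) ≤ d * u n * (64 * C * ((n:ℝ)*((n:ℝ)+1))^2 * C) := hgoal
          _ ≤ d * u n * (Q n * Q (n+1)) := by
              apply mul_le_mul_of_nonneg_left hprod (by positivity)
      have hstep : u (n+1) ≤ u n + d * u n^2 := by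
        rw [husucc n]
        have := hupos n
        nlinarith [hγ]
      have hun : u n ≤ 1/t := ih
      have hupn := hupos n
      have hfinal : u n + d * u n^2 ≤ 1/t + d/t^2 := by
        have h2' : u n^2 ≤ (1/t)^2 := by
          apply sq_le_sq' _ hun
          nlinarith
        have : d * u n^2 ≤ d * (1/t)^2 := mul_le_mul_of_nonneg_left h2' hd0
        have e : d * (1/t)^2 = d/t^2 := by field_simp
        linarith [this, hun, e ▸ this]
      refine le_trans hstep (le_trans hfinal ?_)
      -- 1/t + d/t² ≤ 1/(t-d)
      rw [div_add_div _ _ (ne_of_gt htpos) (ne_of_gt (by positivity : (0:ℝ) < t^2))]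
      rw [div_le_div_iff₀ (by positivity) ht'pos]
      nlinarith [mul_nonneg (mul_nonneg htpos.le hd0) hd0]
  -- uniform bound
  have hu2 : ∀ n, u n ≤ 2 := by
    intro n
    rcases Nat.eq_zero_or_pos n with h|h
    · rw [h]
      have : u 0 = 1 := by simp only [hudef]; simp
      rw [this]; norm_num
    · have hb := hub n h
      have hn1 : (1:ℝ) ≤ (n:ℝ) := by exact_mod_cast h
      have hnpos : (0:ℝ) < (n:ℝ) := by linarith
      have hinv : 1/(n:ℝ) ≤ 1 := by rw [div_le_one hnpos]; exact hn1
      have hinv0 : 0 ≤ 1/(n:ℝ) := by positivity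
      have htlb : (63:ℝ)/64 ≤ 1 - (1/64) * (1 - 1/(n:ℝ)) := by nlinarith
      have : 1 / (1 - (1/64) * (1 - 1/(n:ℝ))) ≤ 64/63 := by
        rw [div_le_div_iff₀ (by linarith) (by norm_num)]
        linarith
      linarith
  -- conclude
  have hbdd : BddAbove (Set.range u) := by
    refine ⟨2, ?_⟩
    rintro x ⟨n, rfl⟩
    exact hu2 n
  have htend : Tendsto u atTop (nhds (⨆ n, u n)) := tendsto_atTop_ciSup humono hbdd
  have hKpos : 0 < ⨆ n, u n := by
    have h01 : u 0 = 1 := by simp only [hudef]; simp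
    have := le_ciSup hbdd 0
    rw [h01] at this
    linarith
  refine ⟨⨆ n, u n, hKpos, ?_, ?_⟩
  · have hfeq : (fun n : ℕ => ∏ j ∈ Finset.Icc 1 n,
        (1 + ((∑ l ∈ Finset.Icc 1 j, φ l * φ (j - l)) / φ j) / Q j)) = u := by
      simp only [hudef, hΓdef]
    exact hfeq ▸ htend
  · have hshift : Tendsto (fun n : ℕ => u (n - 1)) atTop (nhds (⨆ n, u n)) :=
      htend.comp (tendsto_sub_atTop_nat 1)
    have heq : (fun n : ℕ => u (n - 1)) =ᶠ[atTop]
        (fun n : ℕ => φ n / (C * ∏ j ∈ Finset.Icc 1 (n-1), Q j)) := by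
      rw [Filter.eventuallyEq_iff_exists_mem]
      refine ⟨{n | 1 ≤ n}, Filter.mem_atTop 1, ?_⟩
      intro n hn
      simp only [Set.mem_setOf_eq] at hn
      have hid := hId (n-1)
      rw [show n-1+1 = n by omega] at hid
      have hWne : (∏ j ∈ Finset.Icc 1 (n-1), Q j) ≠ 0 := by
        have := hWpos (n-1)
        simp only [hWdef] at this
        exact ne_of_gt this
      have hCne : C ≠ 0 := ne_of_gt hCpos
      simp only
      rw [hid, hWdef]
      field_simp
    exact hshift.congr' heq
end
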